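/- Convergence theorem: under the mesh condition h < 2D/v and assuming the truncation error bound max_i|R_i^l| ≤ C₁(n^β + h²) with β = -min{2-α, rα}, there exists a constant C independent of n and h such that the scheme errors satisfy ‖e^l‖_∞ ≤ C(n^β + h²) for all 1 ≤ l ≤ n. -/

import Mathlib

noncomputable def gradedCoef (r α : ℝ) (j l : ℕ) : ℝ :=
  (((l : ℝ) ^ r - (j : ℝ) ^ r) / (((j : ℝ) + 1) ^ r - (j : ℝ) ^ r)) ^ (1 - α) -
  (((l : ℝ) ^ r - ((j : ℝ) + 1) ^ r) / (((j : ℝ) + 1) ^ r - (j : ℝ) ^ r)) ^ (1 - α)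

noncomputable def meshPt (r T : ℝ) (n i : ℕ) : ℝ := ((i : ℝ) / (n : ℝ)) ^ r * T

noncomputable def meshStep (r T : ℝ) (n i : ℕ) : ℝ := meshPt r T n (i + 1) - meshPt r T n i

lemma delta_pos {r : ℝ} (hr : 0 < r) (j : ℕ) : 0 < ((j : ℝ) + 1) ^ r - (j : ℝ) ^ r :=
  sub_pos.mpr (Real.rpow_lt_rpow (Nat.cast_nonneg j) (lt_add_one _) hr)

lemma meshStep_eq {r T : ℝ} (n j : ℕ) (hn : 1 ≤ n) :
    meshStep r T n j = T / (n : ℝ) ^ r * (((j : ℝ) + 1) ^ r - (j : ℝ) ^ r) := by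
  have hn' : (0 : ℝ) < n := by exact_mod_cast hn
  unfold meshStep meshPt
  push_cast
  rw [Real.div_rpow (by positivity) hn'.le, Real.div_rpow (Nat.cast_nonneg j) hn'.le]
  ring

lemma meshStep_pos {r T : ℝ} (hr : 0 < r) (hT : 0 < T) (n j : ℕ) (hn : 1 ≤ n) :
    0 < meshStep r T n j := by
  have hn' : (0 : ℝ) < n := by exact_mod_cast hn
  rw [meshStep_eq n j hn]
  exact mul_pos (by positivity) (delta_pos hr j)

lemma gradedCoef_last {r α : ℝ} (hα1 : α < 1) (hr : 0 < r) (l : ℕ) (hl : 1 ≤ l) :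
    gradedCoef r α (l - 1) l = 1 := by
  unfold gradedCoef
  have hc : ((l - 1 : ℕ) : ℝ) = (l : ℝ) - 1 := by
    have := Nat.cast_sub (R := ℝ) hl
    simpa using this
  have hl' : (1 : ℝ) ≤ (l : ℝ) := by exact_mod_cast hl
  rw [hc, show (l : ℝ) - 1 + 1 = (l : ℝ) by ring]
  have hΔ : 0 < (l : ℝ) ^ r - ((l : ℝ) - 1) ^ r :=
    sub_pos.mpr (Real.rpow_lt_rpow (by linarith) (by linarith) hr)
  rw [div_self hΔ.ne', Real.one_rpow, sub_self, zero_div,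
    Real.zero_rpow (by intro hz; linarith [hz] : (1 : ℝ) - α ≠ 0)]
  ring

lemma Brep {α r T : ℝ} (hα0 : 0 < α) (hα1 : α < 1) (hr : 1 ≤ r) (hT : 0 < T)
    (n l j : ℕ) (hn : 1 ≤ n) (hjl : j + 1 ≤ l) :
    meshStep r T n j ^ (-α) * gradedCoef r α j l
      = (T / (n : ℝ) ^ r) ^ (-α) *
        ((((l : ℝ) ^ r - (j : ℝ) ^ r) ^ (1 - α) -
          ((l : ℝ) ^ r - ((j : ℝ) + 1) ^ r) ^ (1 - α)) /
          (((j : ℝ) + 1) ^ r - (j : ℝ) ^ r)) := by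
  have hr0 : (0 : ℝ) < r := lt_of_lt_of_le one_pos hr
  have hn' : (0 : ℝ) < n := by exact_mod_cast hn
  have hΔ := delta_pos hr0 j
  have hjl' : (j : ℝ) + 1 ≤ (l : ℝ) := by exact_mod_cast hjl
  have hX2 : 0 ≤ (l : ℝ) ^ r - ((j : ℝ) + 1) ^ r :=
    sub_nonneg.mpr (Real.rpow_le_rpow (by positivity) hjl' hr0.le)
  have hX1 : 0 ≤ (l : ℝ) ^ r - (j : ℝ) ^ r := by linarith
  have hc : (0 : ℝ) < T / (n : ℝ) ^ r := by positivity
  rw [meshStep_eq n j hn]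
  unfold gradedCoef
  rw [Real.mul_rpow hc.le hΔ.le, Real.div_rpow hX1 hΔ.le, Real.div_rpow hX2 hΔ.le,
    div_sub_div_same]
  have hkey : (((j : ℝ) + 1) ^ r - (j : ℝ) ^ r) ^ (-α)
      = (((j : ℝ) + 1) ^ r - (j : ℝ) ^ r) ^ (1 - α) / ((((j : ℝ) + 1) ^ r - (j : ℝ) ^ r)) := by
    rw [show (-α) = (1 - α) - 1 by ring, Real.rpow_sub hΔ, Real.rpow_one]
  rw [hkey]
  have hΔp : (0 : ℝ) < (((j : ℝ) + 1) ^ r - (j : ℝ) ^ r) ^ (1 - α) :=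
    Real.rpow_pos_of_pos hΔ _
  field_simp

open Real Finset

/-- Tangent-line inequality for concave rpow. -/
lemma rpow_tangent {p x y : ℝ} (hp0 : 0 < p) (hp1 : p < 1) (hy : 0 ≤ y) (hyx : y ≤ x) :
    p * x ^ (p - 1) * (x - y) ≤ x ^ p - y ^ p := by
  rcases eq_or_lt_of_le (hy.trans hyx) with hx0 | hx0
  · have hy0 : y = 0 := le_antisymm (hyx.trans hx0.symm.le) hy
    rw [hy0, ← hx0, Real.zero_rpow hp0.ne']
    simp
  · have hB := rpow_one_add_le_one_add_mul_self (s := y / x - 1)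
      (by have h := div_nonneg hy hx0.le; linarith) hp0.le hp1.le
    have h1 : (1 : ℝ) + (y / x - 1) = y / x := by ring
    rw [h1, Real.div_rpow hy hx0.le] at hB
    have hxp : (0 : ℝ) < x ^ p := Real.rpow_pos_of_pos hx0 p
    have hx' : x ≠ 0 := hx0.ne'
    have key : y ^ p * x ≤ x ^ p * (x + p * (y - x)) := by
      calc y ^ p * x = (x ^ p * x) * (y ^ p / x ^ p) := by field_simp
        _ ≤ (x ^ p * x) * (1 + p * (y / x - 1)) :=
            mul_le_mul_of_nonneg_left hB (by positivity)
        _ = x ^ p * (x + p * (y - x)) := by field_simp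
    have h3 : x ^ (p - 1) = x ^ p / x := by rw [Real.rpow_sub hx0, Real.rpow_one]
    rw [h3, show p * (x ^ p / x) * (x - y) = p * x ^ p * (x - y) / x by ring,
      div_le_iff₀ hx0]
    nlinarith [key]

/-- Secant slope inequality for concave rpow. -/
lemma rpow_secant {p a m b : ℝ} (hp0 : 0 < p) (hp1 : p < 1) (ha : 0 ≤ a) (ham : a < m)
    (hmb : m < b) : (b ^ p - m ^ p) / (b - m) ≤ (m ^ p - a ^ p) / (m - a) :=
  (Real.concaveOn_rpow hp0.le hp1.le).slope_anti_adjacent (Set.mem_Ici.mpr ha)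
    (Set.mem_Ici.mpr (ha.trans (ham.trans hmb).le)) ham hmb

lemma B_mono {α r T : ℝ} (hα0 : 0 < α) (hα1 : α < 1) (hr : 1 ≤ r) (hT : 0 < T)
    (n l j : ℕ) (hn : 1 ≤ n) (hjl : j + 2 ≤ l) :
    meshStep r T n j ^ (-α) * gradedCoef r α j l
      ≤ meshStep r T n (j + 1) ^ (-α) * gradedCoef r α (j + 1) l := by
  have hr0 : (0 : ℝ) < r := lt_of_lt_of_le one_pos hr
  rw [Brep hα0 hα1 hr hT n l j hn (by omega), Brep hα0 hα1 hr hT n l (j + 1) hn (by omega)]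
  push_cast
  set x := (j : ℝ) with hxdef
  set lr := (l : ℝ) ^ r with hlrdef
  have hx : 0 ≤ x := Nat.cast_nonneg j
  have hjl' : x + 2 ≤ (l : ℝ) := by rw [hxdef]; exact_mod_cast hjl
  have h1 : x ^ r < (x + 1) ^ r := Real.rpow_lt_rpow hx (by linarith) hr0
  have h2 : (x + 1) ^ r < (x + 2) ^ r := Real.rpow_lt_rpow (by linarith) (by linarith) hr0
  have h3 : (x + 2) ^ r ≤ lr := Real.rpow_le_rpow (by linarith) hjl' hr0.le
  have hsec := rpow_secant (p := 1 - α) (by linarith) (by linarith)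
      (a := lr - (x + 2) ^ r) (m := lr - (x + 1) ^ r) (b := lr - x ^ r)
      (by linarith) (by linarith) (by linarith)
  apply mul_le_mul_of_nonneg_left _ (Real.rpow_pos_of_pos (by positivity) _).le
  have e1 : (x + 1) ^ r - x ^ r = (lr - x ^ r) - (lr - (x + 1) ^ r) := by ring
  have e2 : (x + 1 + 1) ^ r - (x + 1) ^ r = (lr - (x + 1) ^ r) - (lr - (x + 1 + 1) ^ r) := by
    ring
  rw [e1, e2, show x + 1 + 1 = x + 2 by ring]
  exact hsec

lemma B_zero {α r T : ℝ} (hα0 : 0 < α) (hα1 : α < 1) (hr : 1 ≤ r) (hT : 0 < T)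
    (n l : ℕ) (hn : 1 ≤ n) (hl1 : 1 ≤ l) (hln : l ≤ n) :
    (1 - α) * T ^ (-α) ≤ meshStep r T n 0 ^ (-α) * gradedCoef r α 0 l := by
  have hr0 : (0 : ℝ) < r := lt_of_lt_of_le one_pos hr
  have hn' : (0 : ℝ) < n := by exact_mod_cast hn
  have hl' : (1 : ℝ) ≤ (l : ℝ) := by exact_mod_cast hl1
  rw [Brep hα0 hα1 hr hT n l 0 hn (by omega)]
  simp only [Nat.cast_zero]
  rw [Real.zero_rpow hr0.ne', zero_add, Real.one_rpow]
  norm_num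
  have hlr1 : (1 : ℝ) ≤ (l : ℝ) ^ r := by
    calc (1 : ℝ) = 1 ^ r := (Real.one_rpow r).symm
      _ ≤ (l : ℝ) ^ r := Real.rpow_le_rpow zero_le_one hl' hr0.le
  have htan := rpow_tangent (p := 1 - α) (x := (l : ℝ) ^ r) (y := (l : ℝ) ^ r - 1)
    (by linarith) (by linarith) (by linarith) (by linarith)
  have hc : (0 : ℝ) < (T / (n : ℝ) ^ r) ^ (-α) := Real.rpow_pos_of_pos (by positivity) _
  have hkey : T ^ (-α) ≤ (T / (n : ℝ) ^ r) ^ (-α) * ((l : ℝ) ^ r) ^ ((1 - α) - 1) := by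
    rw [show (1 - α) - 1 = -α by ring, ← Real.mul_rpow (by positivity) (by positivity)]
    apply Real.rpow_le_rpow_of_nonpos (by positivity) ?_ (by linarith)
    have hln' : (l : ℝ) ^ r ≤ (n : ℝ) ^ r :=
      Real.rpow_le_rpow (by positivity) (by exact_mod_cast hln) hr0.le
    rw [div_mul_eq_mul_div, div_le_iff₀ (by positivity)]
    nlinarith [hln', hT]
  have h5 := mul_le_mul_of_nonneg_left hkey (show (0 : ℝ) ≤ 1 - α by linarith)
  have h6 := mul_le_mul_of_nonneg_left htan hc.le
  linarith [h5, h6]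

noncomputable def T1op (α r T v D h : ℝ) (n : ℕ) (Y : ℕ → ℕ → ℝ) (i l : ℕ) : ℝ :=
  meshStep r T n (l - 1) ^ (-α) / Real.Gamma (2 - α) * Y i l +
    v * (Y (i + 1) l - Y (i - 1) l) / (2 * h) -
    D * (Y (i + 1) l - 2 * Y i l + Y (i - 1) l) / h ^ 2

noncomputable def T2op (α r T : ℝ) (n : ℕ) (Y : ℕ → ℕ → ℝ) (i l : ℕ) : ℝ :=
  meshStep r T n (l - 1) ^ (-α) / Real.Gamma (2 - α) * Y i (l - 1) -
    (1 / Real.Gamma (2 - α)) *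
      ∑ j ∈ Finset.range (l - 1),
        meshStep r T n j ^ (-α) * gradedCoef r α j l * (Y i (j + 1) - Y i j)

/-- Convergence of the implicit L1 graded-mesh scheme: there is a constant `C`
independent of `n` and `h` bounding the scheme error by `C (n^β + h²)`. -/
theorem scheme_convergence (α r T v D L C₁ : ℝ) (hα0 : 0 < α) (hα1 : α < 1)
    (hr : 1 ≤ r) (hT : 0 < T) (hv : 0 < v) (hD : 0 < D) (hL : 0 < L) (hC₁ : 0 < C₁)
    (β : ℝ) (hβ : β = -min (2 - α) (r * α)) :
    ∃ C : ℝ, 0 < C ∧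
      ∀ (n K : ℕ), 1 ≤ n → 2 ≤ K → ∀ h : ℝ, h = L / K → h < 2 * D / v →
        ∀ e R : ℕ → ℕ → ℝ,
          (∀ l, 1 ≤ l → l ≤ n → ∀ i, 1 ≤ i → i ≤ K - 1 →
            |R i l| ≤ C₁ * ((n : ℝ) ^ β + h ^ 2)) →
          (∀ i, e i 0 = 0) →
          (∀ l, l ≤ n → e 0 l = 0 ∧ e K l = 0) →
          (∀ l, 1 ≤ l → l ≤ n → ∀ i, 1 ≤ i → i ≤ K - 1 →
            T1op α r T v D h n e i l = T2op α r T n e i l + R i l) →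
          ∀ l, 1 ≤ l → l ≤ n → ∀ i, 1 ≤ i → i ≤ K - 1 →
            |e i l| ≤ C * ((n : ℝ) ^ β + h ^ 2) := by
  have hr0 : (0 : ℝ) < r := lt_of_lt_of_le one_pos hr
  have h2α : (0 : ℝ) < 2 - α := by linarith
  have hΓ : 0 < Real.Gamma (2 - α) := Real.Gamma_pos_of_pos h2α
  have hTα : (0 : ℝ) < T ^ α := Real.rpow_pos_of_pos hT α
  set C : ℝ := Real.Gamma (2 - α) * C₁ * T ^ α / (1 - α) with hCdef
  have hC : 0 < C := div_pos (mul_pos (mul_pos hΓ hC₁) hTα) (by linarith)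
  refine ⟨C, hC, ?_⟩
  intro n K hn hK h hh hhv e R hR he0 hbdy hsch
  have hn' : (0 : ℝ) < n := by exact_mod_cast hn
  have hh0 : 0 < h := by
    rw [hh]
    have hK' : (0 : ℝ) < K := by exact_mod_cast (by omega : 0 < K)
    positivity
  set ρ : ℝ := (n : ℝ) ^ β + h ^ 2 with hρdef
  have hρ : 0 < ρ := add_pos_of_pos_of_nonneg (Real.rpow_pos_of_pos hn' β) (sq_nonneg h)
  have hCρ : 0 ≤ C * ρ := mul_nonneg hC.le hρ.le
  suffices key : ∀ l, l ≤ n → ∀ i, i ≤ K → |e i l| ≤ C * ρ by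
    intro l hl1 hln i hi1 hiK
    exact key l hln i (by omega)
  intro l
  induction l using Nat.strong_induction_on with
  | _ l IH =>
  intro hln i hiK
  rcases Nat.eq_zero_or_pos l with rfl | hl1
  · rw [he0 i]; simpa using hCρ
  obtain ⟨l', rfl⟩ : ∃ l'', l = l'' + 1 := ⟨l - 1, by omega⟩
  obtain ⟨i0, hi0mem, hi0max⟩ := Finset.exists_max_image (Finset.range (K + 1))
    (fun i => |e i (l' + 1)|) ⟨0, Finset.mem_range.mpr (by omega)⟩
  have hi0K : i0 ≤ K := by have := Finset.mem_range.mp hi0mem; omega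
  have hmax : ∀ i', i' ≤ K → |e i' (l' + 1)| ≤ |e i0 (l' + 1)| := fun i' h' =>
    hi0max i' (Finset.mem_range.mpr (by omega))
  refine le_trans (hmax i hiK) ?_
  by_cases hb : i0 = 0 ∨ i0 = K
  · have hz : e i0 (l' + 1) = 0 := by
      rcases hb with rfl | rfl
      exacts [(hbdy _ hln).1, (hbdy _ hln).2]
    rw [hz]; simpa using hCρ
  push_neg at hb
  have hi01 : 1 ≤ i0 := by omega
  have hi0K1 : i0 ≤ K - 1 := by omega
  set ε : ℝ := if 0 ≤ e i0 (l' + 1) then 1 else -1 with hεdef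
  have hεabs : ε * e i0 (l' + 1) = |e i0 (l' + 1)| := by
    rw [hεdef]; split_ifs with h'
    · rw [if_pos h'] at *; rw [one_mul, abs_of_nonneg h']
    · rw [abs_of_neg (not_le.mp h')]; ring
  have hε1 : |ε| = 1 := by rw [hεdef]; split_ifs <;> simp
  set u : ℕ → ℝ := fun j => ε * e i0 j with hudef
  have hub : ∀ j, u j ≤ |e i0 j| := by
    intro j
    calc u j ≤ |u j| := le_abs_self _
      _ = |ε| * |e i0 j| := by rw [hudef]; exact abs_mul ε _
      _ = |e i0 j| := by rw [hε1, one_mul]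
  have hule : ∀ i', i' ≤ K → ε * e i' (l' + 1) ≤ u (l' + 1) := by
    intro i' h'
    have h1 : ε * e i' (l' + 1) ≤ |e i' (l' + 1)| := by
      calc ε * e i' (l' + 1) ≤ |ε * e i' (l' + 1)| := le_abs_self _
        _ = |e i' (l' + 1)| := by rw [abs_mul, hε1, one_mul]
    have h2 : u (l' + 1) = |e i0 (l' + 1)| := hεabs
    rw [h2]
    exact h1.trans (hmax i' h')
  have hs := hsch (l' + 1) (by omega) hln i0 hi01 hi0K1
  set d : ℝ := meshStep r T n l' ^ (-α) / Real.Gamma (2 - α) with hddef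
  set B : ℕ → ℝ := fun j => meshStep r T n j ^ (-α) * gradedCoef r α j (l' + 1) with hBdef
  set S : ℝ := ∑ j ∈ Finset.range l', B j * (u (j + 1) - u j) with hSdef
  -- Step A : maximum principle
  have hcoef1 : v / (2 * h) ≤ D / h ^ 2 := by
    rw [div_le_div_iff₀ (by positivity) (by positivity)]
    rw [lt_div_iff₀ hv] at hhv
    nlinarith [hh0]
  have e1 := hule (i0 + 1) (by omega)
  have e2 := hule (i0 - 1) (by omega)
  have expand : ε * T1op α r T v D h n e i0 (l' + 1) - d * u (l' + 1)
      = (D / h ^ 2 - v / (2 * h)) * (u (l' + 1) - ε * e (i0 + 1) (l' + 1))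
        + (D / h ^ 2 + v / (2 * h)) * (u (l' + 1) - ε * e (i0 - 1) (l' + 1)) := by
    simp only [T1op, Nat.add_sub_cancel, hddef, hudef]
    ring
  have hA : d * u (l' + 1) ≤ ε * T1op α r T v D h n e i0 (l' + 1) := by
    have t1 : 0 ≤ (D / h ^ 2 - v / (2 * h)) * (u (l' + 1) - ε * e (i0 + 1) (l' + 1)) :=
      mul_nonneg (by linarith) (by linarith)
    have t2 : 0 ≤ (D / h ^ 2 + v / (2 * h)) * (u (l' + 1) - ε * e (i0 - 1) (l' + 1)) :=
      mul_nonneg (by positivity) (by linarith)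
    linarith [expand]
  have hsumswap : S
      = ε * ∑ j ∈ Finset.range l',
          meshStep r T n j ^ (-α) * gradedCoef r α j (l' + 1) * (e i0 (j + 1) - e i0 j) := by
    rw [hSdef, Finset.mul_sum]
    refine Finset.sum_congr rfl fun j _ => ?_
    simp only [hBdef, hudef]
    ring
  have expand2 : ε * T2op α r T n e i0 (l' + 1)
      = d * u l' - (1 / Real.Gamma (2 - α)) * S := by
    rw [hsumswap]
    simp only [T2op, Nat.add_sub_cancel, hddef, hudef]
    ring
  have hseq : ε * T1op α r T v D h n e i0 (l' + 1)
      = ε * T2op α r T n e i0 (l' + 1) + ε * R i0 (l' + 1) := by rw [hs]; ring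
  have hG1 : d * u (l' + 1)
      ≤ d * u l' - (1 / Real.Gamma (2 - α)) * S + ε * R i0 (l' + 1) := by
    linarith [hA, hseq, expand2]
  -- multiply by Gamma
  have hBl : B l' = meshStep r T n l' ^ (-α) := by
    have hgc := gradedCoef_last (r := r) hα1 hr0 (l' + 1) (by omega)
    simp only [Nat.add_sub_cancel] at hgc
    simp only [hBdef]
    rw [hgc, mul_one]
  have hBlpos : 0 < B l' := by
    rw [hBl]; exact Real.rpow_pos_of_pos (meshStep_pos hr0 hT n l' hn) _
  have hdB : d * Real.Gamma (2 - α) = B l' := by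
    rw [hddef, hBl, div_mul_cancel₀ _ hΓ.ne']
  have hG2 : B l' * u (l' + 1)
      ≤ B l' * u l' - S + Real.Gamma (2 - α) * (ε * R i0 (l' + 1)) := by
    have hmul := mul_le_mul_of_nonneg_left hG1 hΓ.le
    calc B l' * u (l' + 1) = Real.Gamma (2 - α) * (d * u (l' + 1)) := by rw [← hdB]; ring
      _ ≤ Real.Gamma (2 - α) *
          (d * u l' - (1 / Real.Gamma (2 - α)) * S + ε * R i0 (l' + 1)) := hmul
      _ = B l' * u l' - S + Real.Gamma (2 - α) * (ε * R i0 (l' + 1)) := by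
          rw [← hdB]; field_simp
  have hG3 : ∑ j ∈ Finset.range (l' + 1), B j * (u (j + 1) - u j)
      ≤ Real.Gamma (2 - α) * (ε * R i0 (l' + 1)) := by
    rw [Finset.sum_range_succ, ← hSdef]
    linarith [hG2]
  have hu0 : u 0 = 0 := by simp [hudef, he0]
  have habel := Finset.sum_range_by_parts B (fun j => u (j + 1) - u j) (l' + 1)
  simp only [smul_eq_mul, Nat.add_sub_cancel, Finset.sum_range_sub, hu0, sub_zero] at habel
  have hG4 : B l' * u (l' + 1)
      ≤ Real.Gamma (2 - α) * (ε * R i0 (l' + 1))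
        + ∑ i ∈ Finset.range l', (B (i + 1) - B i) * u (i + 1) := by
    linarith [hG3, habel]
  have hsb : ∑ i ∈ Finset.range l', (B (i + 1) - B i) * u (i + 1) ≤ (B l' - B 0) * (C * ρ) := by
    have step : ∀ i ∈ Finset.range l',
        (B (i + 1) - B i) * u (i + 1) ≤ (B (i + 1) - B i) * (C * ρ) := by
      intro i hi
      have hi' : i < l' := Finset.mem_range.mp hi
      have hmono : B i ≤ B (i + 1) := B_mono hα0 hα1 hr hT n (l' + 1) i hn (by omega)
      have hu : u (i + 1) ≤ C * ρ :=
        le_trans (hub (i + 1)) (IH (i + 1) (by omega) (by omega) i0 hi0K)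
      exact mul_le_mul_of_nonneg_left hu (by linarith)
    calc ∑ i ∈ Finset.range l', (B (i + 1) - B i) * u (i + 1)
        ≤ ∑ i ∈ Finset.range l', (B (i + 1) - B i) * (C * ρ) := Finset.sum_le_sum step
      _ = (B l' - B 0) * (C * ρ) := by rw [← Finset.sum_mul, Finset.sum_range_sub]
  have hRb : Real.Gamma (2 - α) * (ε * R i0 (l' + 1)) ≤ Real.Gamma (2 - α) * (C₁ * ρ) := by
    refine mul_le_mul_of_nonneg_left ?_ hΓ.le
    calc ε * R i0 (l' + 1) ≤ |ε * R i0 (l' + 1)| := le_abs_self _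
      _ = |R i0 (l' + 1)| := by rw [abs_mul, hε1, one_mul]
      _ ≤ C₁ * ρ := hR (l' + 1) (by omega) hln i0 hi01 hi0K1
  have hB0 : (1 - α) * T ^ (-α) ≤ B 0 :=
    B_zero hα0 hα1 hr hT n (l' + 1) hn (by omega) hln
  have hTT : T ^ (-α) * T ^ α = 1 := by
    rw [← Real.rpow_add hT]; norm_num
  have hB0C : Real.Gamma (2 - α) * C₁ ≤ B 0 * C := by
    have hne : (1 : ℝ) - α ≠ 0 := ne_of_gt (by linarith)
    have heq : ((1 - α) * T ^ (-α)) * C = Real.Gamma (2 - α) * C₁ := by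
      rw [hCdef]
      field_simp [hne]
      linear_combination hTT
    linarith [mul_le_mul_of_nonneg_right hB0 hC.le, heq]
  have hfin : B l' * u (l' + 1) ≤ B l' * (C * ρ) := by
    linarith [hG4, hsb, hRb, mul_le_mul_of_nonneg_right hB0C hρ.le]
  have hfin2 : u (l' + 1) ≤ C * ρ := le_of_mul_le_mul_left hfin hBlpos
  rw [← hεabs]
  exact hfin2
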